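/- Let n ∈ ℕ, let A be a metric space, let r ≥ 0, and let v be a bounded real-valued function of (x, a, F) ∈ ℝⁿ × A × {Borel probability measures on ℝ} that is jointly lower semicontinuous when the measure argument carries the topology of weak convergence. For x ∈ ℝⁿ, a ∈ A, and a Borel probability measure f on ℝ with finite first moment, define ṽ(x, f, a) = inf { v(x, a, F) : F a Borel probability measure on ℝ with W₁(F, f) ≤ r }. If (x_k, a_k) → (x₀, a₀) and W₁(f_k, f₀) → 0 (all f_k, f₀ having finite first moment), then liminf_{k→∞} ṽ(x_k, f_k, a_k) ≥ ṽ(x₀, f₀, a₀); that is, ṽ is lower semicontinuous. -/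

import Mathlib

open MeasureTheory Filter Topology
open scoped ENNReal NNReal

/-- Wasserstein-1 distance via the Kantorovich–Rubinstein dual formula, the supremum
over bounded 1-Lipschitz test functions being taken in `[0,∞]`. -/
noncomputable def W1e (μ ν : Measure ℝ) : ℝ≥0∞ :=
  ⨆ f ∈ {f : ℝ → ℝ | LipschitzWith 1 f ∧ ∃ C, ∀ x, |f x| ≤ C},
    ENNReal.ofReal ((∫ x, f x ∂μ) - ∫ x, f x ∂ν)

/-- The robust one-step value `ṽ(x, f, a) = inf { v(x, a, F) : W₁(F, f) ≤ r }`. -/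
noncomputable def vtil {n : ℕ} {A : Type*} (r : ℝ)
    (v : (Fin n → ℝ) → A → ProbabilityMeasure ℝ → ℝ)
    (x : Fin n → ℝ) (f : Measure ℝ) (a : A) : ℝ :=
  sInf {c : ℝ | ∃ F : ProbabilityMeasure ℝ,
    W1e (F : Measure ℝ) f ≤ ENNReal.ofReal r ∧ c = v x a F}

namespace RobustAux

open Set

lemma le_W1e (μ ν : Measure ℝ) {f : ℝ → ℝ} (h1 : LipschitzWith 1 f)
    (h2 : ∃ C, ∀ x, |f x| ≤ C) :
    ENNReal.ofReal ((∫ x, f x ∂μ) - ∫ x, f x ∂ν) ≤ W1e μ ν := by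
  unfold W1e
  exact le_iSup₂_of_le f ⟨h1, h2⟩ le_rfl

lemma W1e_self (μ : Measure ℝ) : W1e μ μ = 0 := by
  refine le_antisymm ?_ zero_le
  unfold W1e
  exact iSup₂_le fun f _ => by simp

lemma W1e_triangle (μ κ ν : Measure ℝ) : W1e μ ν ≤ W1e μ κ + W1e κ ν := by
  have h : ∀ f : ℝ → ℝ, f ∈ {f : ℝ → ℝ | LipschitzWith 1 f ∧ ∃ C, ∀ x, |f x| ≤ C} →
      ENNReal.ofReal ((∫ x, f x ∂μ) - ∫ x, f x ∂ν) ≤ W1e μ κ + W1e κ ν := by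
    intro f hf
    have hsum : (∫ x, f x ∂μ) - ∫ x, f x ∂ν
        = ((∫ x, f x ∂μ) - ∫ x, f x ∂κ) + ((∫ x, f x ∂κ) - ∫ x, f x ∂ν) := by ring
    rw [hsum]
    exact ENNReal.ofReal_add_le.trans
      (add_le_add (le_W1e μ κ hf.1 hf.2) (le_W1e κ ν hf.1 hf.2))
  exact iSup₂_le h

lemma W1e_le_liminf {Fs : ℕ → ProbabilityMeasure ℝ} {F : ProbabilityMeasure ℝ}
    (h : Tendsto Fs atTop (𝓝 F)) (ν : Measure ℝ) :
    W1e (F : Measure ℝ) ν ≤ liminf (fun k => W1e (Fs k : Measure ℝ) ν) atTop := by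
  refine iSup₂_le fun f hf => ?_
  obtain ⟨hlip, C, hC⟩ := hf
  let fb : BoundedContinuousFunction ℝ ℝ :=
    BoundedContinuousFunction.ofNormedAddCommGroup f hlip.continuous C
      (fun x => by simpa [Real.norm_eq_abs] using hC x)
  have hint : Tendsto (fun k => ∫ x, f x ∂(Fs k : Measure ℝ)) atTop
      (𝓝 (∫ x, f x ∂(F : Measure ℝ))) := by
    have := MeasureTheory.ProbabilityMeasure.tendsto_iff_forall_integral_tendsto.mp h fb
    simpa [fb] using this
  have h2 : Tendsto (fun k => ENNReal.ofReal ((∫ x, f x ∂(Fs k : Measure ℝ)) - ∫ x, f x ∂ν))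
      atTop (𝓝 (ENNReal.ofReal ((∫ x, f x ∂(F : Measure ℝ)) - ∫ x, f x ∂ν))) :=
    (ENNReal.continuous_ofReal.tendsto _).comp (hint.sub_const _)
  rw [← h2.liminf_eq]
  exact liminf_le_liminf (Eventually.of_forall fun k => le_W1e _ _ hlip ⟨C, hC⟩)

lemma integrable_of_bdd {μ : Measure ℝ} [IsFiniteMeasure μ] {f : ℝ → ℝ} {C : ℝ}
    (hc : Continuous f) (hC : ∀ x, |f x| ≤ C) : Integrable f μ :=
  (integrable_const C).mono' hc.aestronglyMeasurable
    (Eventually.of_forall fun x => by simpa [Real.norm_eq_abs] using hC x)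

/-- Tightness from a uniform `W1e` bound to a fixed integrable probability measure. -/
lemma tight_of_W1e (ν : ℕ → ProbabilityMeasure ℝ) (f0 : Measure ℝ) [IsProbabilityMeasure f0]
    (hf0 : Integrable id f0) (B : ℝ) (hB : 0 ≤ B)
    (hW : ∀ k, W1e (ν k : Measure ℝ) f0 ≤ ENNReal.ofReal B) :
    ∀ ε : ℝ, 0 < ε → ∃ M : ℝ, 0 < M ∧ ∀ k,
      (ν k : Measure ℝ) {x : ℝ | M ≤ |x|} ≤ ENNReal.ofReal ε := by
  intro ε hε
  set u : ℕ → ℝ → ℝ := fun m x => max (|x| - m) 0 with hu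
  have hu_cont : ∀ m : ℕ, Continuous (u m) := fun m =>
    (continuous_abs.sub continuous_const).max continuous_const
  have hu_bound : ∀ m : ℕ, ∀ x : ℝ, ‖u m x‖ ≤ |x| := by
    intro m x
    rw [Real.norm_eq_abs, abs_of_nonneg (le_max_right _ _)]
    refine max_le ?_ (abs_nonneg x)
    have : (0:ℝ) ≤ m := Nat.cast_nonneg m
    linarith [le_abs_self x]
  have hids : Integrable (fun x : ℝ => |x|) f0 := hf0.abs
  have htend : Tendsto (fun m : ℕ => ∫ x, u m x ∂f0) atTop (𝓝 0) := by
    have h0 : (0 : ℝ) = ∫ _ : ℝ, (0 : ℝ) ∂f0 := by simp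
    rw [h0]
    refine tendsto_integral_of_dominated_convergence (fun x => |x|)
      (fun m => (hu_cont m).aestronglyMeasurable) hids
      (fun m => Eventually.of_forall fun x => hu_bound m x) ?_
    refine Eventually.of_forall fun x => ?_
    have hev : ∀ᶠ m : ℕ in atTop, u m x = 0 := by
      filter_upwards [eventually_ge_atTop (Nat.ceil |x|)] with m hm
      have h1 : |x| ≤ (m : ℝ) := le_trans (Nat.le_ceil |x|) (by exact_mod_cast hm)
      have : |x| - m ≤ 0 := by linarith
      simp [hu, max_eq_right this]
    exact Tendsto.congr' (hev.mono fun m hm => hm.symm) tendsto_const_nhds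
  obtain ⟨m, hm⟩ : ∃ m : ℕ, ∫ x, u m x ∂f0 ≤ 1 :=
    (htend.eventually_le_const (by norm_num : (0:ℝ) < 1)).exists
  set K : ℝ := max (m : ℝ) ((B + 2) / ε) with hK
  have hKm : (m : ℝ) ≤ K := le_max_left _ _
  have hKε : (B + 2) / ε ≤ K := le_max_right _ _
  have hKpos : 0 < K := lt_of_lt_of_le (by positivity) (le_max_right _ _)
  set g : ℝ → ℝ := fun x => min (max (|x| - K) 0) K with hg
  have hglip : LipschitzWith 1 g := by
    have h1 : LipschitzWith 1 (fun x : ℝ => |x| - K) := by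
      refine LipschitzWith.of_dist_le_mul fun x y => ?_
      simp only [Real.dist_eq, NNReal.coe_one, one_mul, sub_sub_sub_cancel_right]
      exact abs_abs_sub_abs_le_abs_sub x y
    exact (h1.max_const 0).min_const K
  have hg_nonneg : ∀ x, 0 ≤ g x := fun x => le_min (le_max_right _ _) hKpos.le
  have hg_le : ∀ x, g x ≤ K := fun _ => min_le_right _ _
  have hg_abs : ∀ x, |g x| ≤ K := fun x => abs_le.2 ⟨by linarith [hg_nonneg x], hg_le x⟩
  have hg_cont : Continuous g := hglip.continuous
  have hu_int : Integrable (u m) f0 :=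
    hids.mono' (hu_cont m).aestronglyMeasurable (Eventually.of_forall (hu_bound m))
  have hgf0 : ∫ x, g x ∂f0 ≤ 1 := by
    refine le_trans (integral_mono (integrable_of_bdd hg_cont hg_abs) hu_int ?_) hm
    intro x
    refine le_trans (min_le_left _ _) (max_le_max ?_ le_rfl)
    linarith [hKm]
  have hdiff : ∀ k, (∫ x, g x ∂(ν k : Measure ℝ)) - ∫ x, g x ∂f0 ≤ B := by
    intro k
    have h1 := (le_W1e (ν k : Measure ℝ) f0 hglip ⟨K, hg_abs⟩).trans (hW k)
    exact (ENNReal.ofReal_le_ofReal_iff hB).1 h1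
  have hint : ∀ k, ∫ x, g x ∂(ν k : Measure ℝ) ≤ B + 1 := by
    intro k
    have := hdiff k
    linarith
  refine ⟨2 * K, by positivity, fun k => ?_⟩
  have hsub : {x : ℝ | 2 * K ≤ |x|} ⊆ {x : ℝ | K ≤ g x} := by
    intro x hx
    simp only [mem_setOf_eq] at hx ⊢
    exact le_min (le_max_of_le_left (by linarith)) le_rfl
  have hmark := mul_meas_ge_le_integral_of_nonneg
    (μ := (ν k : Measure ℝ)) (Eventually.of_forall hg_nonneg)
    (integrable_of_bdd hg_cont hg_abs) K
  have h2 : ((ν k : Measure ℝ) {x : ℝ | 2 * K ≤ |x|}).toReal ≤ (B + 1) / K := by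
    have h3 : ((ν k : Measure ℝ) {x : ℝ | 2 * K ≤ |x|}).toReal
        ≤ ((ν k : Measure ℝ) {x : ℝ | K ≤ g x}).toReal :=
      ENNReal.toReal_mono (measure_ne_top _ _) (measure_mono hsub)
    rw [le_div_iff₀ hKpos, mul_comm]
    exact le_trans (mul_le_mul_of_nonneg_left h3 hKpos.le) (le_trans hmark (hint k))
  have h4 : (B + 1) / K ≤ ε := by
    rw [div_le_iff₀ hKpos]
    have h5 : (B + 2) / ε * ε ≤ K * ε :=
      mul_le_mul_of_nonneg_right hKε hε.le
    rw [div_mul_cancel₀ _ hε.ne'] at h5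
    linarith [mul_comm K ε ▸ h5]
  exact (ENNReal.le_ofReal_iff_toReal_le (measure_ne_top _ _) hε.le).2 (h2.trans h4)

lemma iUnion_Ioc_succ {t : ℕ → ℝ} (ht : Monotone t) (N : ℕ) :
    (⋃ j ∈ Finset.range N, Ioc (t j) (t (j+1))) = Ioc (t 0) (t N) := by
  induction N with
  | zero => simp
  | succ N ih =>
      rw [Finset.range_add_one, Finset.set_biUnion_insert, ih, union_comm,
        Ioc_union_Ioc_eq_Ioc (ht (Nat.zero_le N)) (ht (Nat.le_succ N))]

/-- Helly-type selection theorem: a tight sequence of probability measures on `ℝ` has a weakly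
convergent subsequence. -/
lemma helly (ν : ℕ → ProbabilityMeasure ℝ)
    (tight : ∀ ε : ℝ, 0 < ε → ∃ M : ℝ, 0 < M ∧ ∀ k,
      (ν k : Measure ℝ) {x : ℝ | M ≤ |x|} ≤ ENNReal.ofReal ε) :
    ∃ ψ : ℕ → ℕ, StrictMono ψ ∧ ∃ μ : ProbabilityMeasure ℝ,
      Tendsto (fun k => ν (ψ k)) atTop (𝓝 μ) := by
  classical
  set c : ℕ → ℝ → ℝ := fun k x => ((ν k : Measure ℝ) (Iic x)).toReal with hc
  have hc01 : ∀ k x, c k x ∈ Icc (0:ℝ) 1 := fun k x =>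
    ⟨ENNReal.toReal_nonneg,
      ENNReal.toReal_le_of_le_ofReal zero_le_one (by simpa using prob_le_one)⟩
  have hcmono : ∀ k, Monotone (c k) := fun k x y hxy =>
    ENNReal.toReal_mono (measure_ne_top _ _) (measure_mono (Iic_subset_Iic.2 hxy))
  -- extract a subsequence converging on the rationals
  set uu : ℕ → (ℚ → Icc (0:ℝ) 1) := fun k q => ⟨c k q, hc01 k q⟩ with huu
  obtain ⟨gl, -, ψ, hψ, hgl⟩ := isCompact_univ.tendsto_subseq (x := uu) (fun k => mem_univ _)
  rw [tendsto_pi_nhds] at hgl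
  set g : ℚ → ℝ := fun q => (gl q : ℝ) with hgdef
  have hg : ∀ q : ℚ, Tendsto (fun k => c (ψ k) q) atTop (𝓝 (g q)) := fun q =>
    (continuous_subtype_val.tendsto (gl q)).comp (hgl q)
  have hg0 : ∀ q, 0 ≤ g q := fun q => (gl q).2.1
  have hg1 : ∀ q, g q ≤ 1 := fun q => (gl q).2.2
  have hgmono : ∀ q q' : ℚ, q ≤ q' → g q ≤ g q' := fun q q' hqq' =>
    le_of_tendsto_of_tendsto' (hg q) (hg q') fun k => hcmono _ (by exact_mod_cast hqq')
  -- the candidate limit CDF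
  set S : ℝ → Set ℝ := fun x => {y | ∃ q : ℚ, x < (q : ℝ) ∧ y = g q} with hSdef
  have hSne : ∀ x, (S x).Nonempty := fun x => by
    obtain ⟨q, hq⟩ := exists_rat_gt x
    exact ⟨g q, q, hq, rfl⟩
  have hSbdd : ∀ x, BddBelow (S x) := fun x => ⟨0, by rintro y ⟨q, -, rfl⟩; exact hg0 q⟩
  set H : ℝ → ℝ := fun x => sInf (S x) with hH
  have H_le : ∀ (x : ℝ) (q : ℚ), x < q → H x ≤ g q := fun x q hq =>
    csInf_le (hSbdd x) ⟨q, hq, rfl⟩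
  have le_H : ∀ (q : ℚ) (x : ℝ), (q : ℝ) ≤ x → g q ≤ H x := by
    intro q x hqx
    refine le_csInf (hSne x) ?_
    rintro y ⟨q', hq', rfl⟩
    refine hgmono q q' ?_
    exact_mod_cast (hqx.trans_lt hq').le
  have H0 : ∀ x, 0 ≤ H x := fun x =>
    le_csInf (hSne x) (by rintro y ⟨q, -, rfl⟩; exact hg0 q)
  have H1 : ∀ x, H x ≤ 1 := by
    intro x
    obtain ⟨q, hq⟩ := exists_rat_gt x
    exact (H_le x q hq).trans (hg1 q)
  have Hmono : Monotone H := by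
    intro x y hxy
    refine csInf_le_csInf (hSbdd x) (hSne y) ?_
    rintro z ⟨q, hq, rfl⟩
    exact ⟨q, hxy.trans_lt hq, rfl⟩
  have Hrc : ∀ x, ContinuousWithinAt H (Ici x) x := by
    intro x
    rw [ContinuousWithinAt, tendsto_order]
    constructor
    · intro a ha
      filter_upwards [eventually_mem_nhdsWithin] with y hy
      exact ha.trans_le (Hmono hy)
    · intro a ha
      obtain ⟨z, ⟨q, hq, rfl⟩, hza⟩ := (csInf_lt_iff (hSbdd x) (hSne x)).1 ha
      filter_upwards [Ico_mem_nhdsGE_of_mem (⟨le_rfl, hq⟩ : x ∈ Ico x (q:ℝ))] with y hy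
      exact (H_le y q hy.2).trans_lt hza
  set St : StieltjesFunction ℝ := ⟨H, Hmono, Hrc⟩ with hSt
  -- tightness of the limit CDF
  have keyLow : ∀ ε : ℝ, 0 < ε → ∃ M : ℝ, 0 < M ∧
      (∀ x : ℝ, x < -M - 1 → H x ≤ ε) ∧ (∀ x : ℝ, M + 1 < x → 1 - ε ≤ H x) := by
    intro ε hε
    obtain ⟨M, hM, hMk⟩ := tight ε hε
    refine ⟨M, hM, ?_, ?_⟩
    · intro x hx
      obtain ⟨q, hq1, hq2⟩ := exists_rat_btwn (show x < -M by linarith)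
      refine (H_le x q hq1).trans ?_
      have hcq : ∀ k, c (ψ k) q ≤ ε := by
        intro k
        refine ENNReal.toReal_le_of_le_ofReal hε.le ((measure_mono ?_).trans (hMk (ψ k)))
        intro y hy
        simp only [mem_Iic] at hy
        have hyM : y ≤ -M := le_trans hy (le_of_lt hq2)
        simp only [mem_setOf_eq]
        rw [abs_of_nonpos (by linarith)]
        linarith
      exact le_of_tendsto (hg q) (Eventually.of_forall hcq)
    · intro x hx
      obtain ⟨q, hq1, hq2⟩ := exists_rat_btwn (show M < x by linarith)
      refine le_trans ?_ (le_H q x hq2.le)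
      have hcq : ∀ k, 1 - ε ≤ c (ψ k) q := by
        intro k
        have hioi : ((ν (ψ k) : Measure ℝ) (Ioi (q:ℝ))).toReal ≤ ε := by
          refine ENNReal.toReal_le_of_le_ofReal hε.le ((measure_mono ?_).trans (hMk (ψ k)))
          intro y hy
          simp only [mem_Ioi] at hy
          simp only [mem_setOf_eq]
          rw [abs_of_nonneg (by linarith)]
          linarith
        have hcompl : (ν (ψ k) : Measure ℝ) (Iic (q:ℝ))
            = 1 - (ν (ψ k) : Measure ℝ) (Ioi (q:ℝ)) := by
          rw [← compl_Ioi, prob_compl_eq_one_sub measurableSet_Ioi]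
        have hck : c (ψ k) q = 1 - ((ν (ψ k) : Measure ℝ) (Ioi (q:ℝ))).toReal := by
          simp only [hc, hcompl,
            ENNReal.toReal_sub_of_le prob_le_one ENNReal.one_ne_top, ENNReal.toReal_one]
        rw [hck]
        linarith
      exact ge_of_tendsto (hg q) (Eventually.of_forall hcq)
  have Hbot : Tendsto H atBot (𝓝 0) := by
    rw [tendsto_order]
    constructor
    · intro a ha
      exact Eventually.of_forall fun x => lt_of_lt_of_le ha (H0 x)
    · intro a ha
      obtain ⟨M, hM, hlow, -⟩ := keyLow (a/2) (by linarith)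
      refine eventually_atBot.2 ⟨-M - 2, fun x hx => ?_⟩
      exact lt_of_le_of_lt (hlow x (by linarith)) (by linarith)
  have Htop : Tendsto H atTop (𝓝 1) := by
    rw [tendsto_order]
    constructor
    · intro a ha
      obtain ⟨M, hM, -, hhigh⟩ := keyLow ((1 - a)/2) (by linarith)
      refine eventually_atTop.2 ⟨M + 2, fun x hx => ?_⟩
      exact lt_of_lt_of_le (by linarith) (hhigh x (by linarith))
    · intro a ha
      exact Eventually.of_forall fun x => lt_of_le_of_lt (H1 x) ha
  have hμuniv : St.measure univ = 1 := by
    rw [St.measure_univ Hbot Htop]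
    norm_num
  haveI hPM : IsProbabilityMeasure St.measure := ⟨hμuniv⟩
  set μP : ProbabilityMeasure ℝ := ⟨St.measure, hPM⟩ with hμP
  -- dense set of continuity points
  have hDcnt : {x : ℝ | ¬ ContinuousAt H x}.Countable := Hmono.countable_not_continuousAt
  have hDdense : Dense {x : ℝ | ContinuousAt H x} := by
    have h := hDcnt.dense_compl ℝ
    have he : {x : ℝ | ¬ ContinuousAt H x}ᶜ = {x : ℝ | ContinuousAt H x} := by
      ext x; simp
    rwa [he] at h
  -- convergence of CDFs at continuity points
  have hD2 : ∀ x : ℝ, ContinuousAt H x → Tendsto (fun k => c (ψ k) x) atTop (𝓝 (H x)) := by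
    intro x hx
    rw [Metric.tendsto_atTop]
    intro ε hε
    obtain ⟨z, ⟨q, hq, rfl⟩, hzlt⟩ := (csInf_lt_iff (hSbdd x) (hSne x)).1
      (show H x < H x + ε/2 by linarith)
    obtain ⟨δ, hδ, hδball⟩ := Metric.continuousAt_iff.1 hx (ε/2) (by linarith)
    have hyH : |H (x - δ/2) - H x| < ε/2 := by
      have hd : dist (x - δ/2) x < δ := by
        rw [Real.dist_eq]
        rw [abs_of_nonpos (by linarith)]
        linarith
      have := hδball hd
      rwa [Real.dist_eq] at this
    obtain ⟨q', hq'1, hq'2⟩ := exists_rat_btwn (show x - δ/2 < x by linarith)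
    have hgq' : H x - ε/2 < g q' := by
      have h1 : H (x - δ/2) ≤ g q' := H_le _ q' hq'1
      have h2 := (abs_lt.1 hyH).1
      linarith
    obtain ⟨N1, hN1⟩ := Metric.tendsto_atTop.1 (hg q) (ε/2) (by linarith)
    obtain ⟨N2, hN2⟩ := Metric.tendsto_atTop.1 (hg q') (ε/2) (by linarith)
    refine ⟨max N1 N2, fun k hk => ?_⟩
    have hk1 := hN1 k (le_trans (le_max_left _ _) hk)
    have hk2 := hN2 k (le_trans (le_max_right _ _) hk)
    rw [Real.dist_eq] at hk1 hk2 ⊢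
    have hub : c (ψ k) x ≤ c (ψ k) q := hcmono _ hq.le
    have hlb : c (ψ k) q' ≤ c (ψ k) x := hcmono _ hq'2.le
    have e1 := abs_lt.1 hk1
    have e2 := abs_lt.1 hk2
    rw [abs_lt]
    constructor
    · linarith
    · linarith
  -- convergence on intervals with endpoints at continuity points
  have hIoc : ∀ a b : ℝ, a ≤ b → ContinuousAt H a → ContinuousAt H b →
      Tendsto (fun k => ((ν (ψ k) : Measure ℝ) (Ioc a b)).toReal) atTop
        (𝓝 ((St.measure (Ioc a b)).toReal)) := by
    intro a b hab hca hcb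
    have hsplit : ∀ k : ℕ, ((ν k : Measure ℝ) (Ioc a b)).toReal = c k b - c k a := by
      intro k
      rw [← Set.Iic_sdiff_Iic, measure_diff (Iic_subset_Iic.2 hab)
        measurableSet_Iic.nullMeasurableSet (measure_ne_top _ _),
        ENNReal.toReal_sub_of_le (measure_mono (Iic_subset_Iic.2 hab)) (measure_ne_top _ _)]
    have hSt2 : (St.measure (Ioc a b)).toReal = H b - H a := by
      rw [St.measure_Ioc]
      exact ENNReal.toReal_ofReal (sub_nonneg.2 (Hmono hab))
    simp only [hsplit, hSt2]
    exact (hD2 b hcb).sub (hD2 a hca)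
  -- open set liminf condition
  have h_opens : ∀ G : Set ℝ, IsOpen G → μP G ≤ atTop.liminf (fun i => (ν (ψ i)) G) := by
    intro G hG
    have key : ∀ εp : ℝ, 0 < εp →
        (μP G : ℝ≥0) ≤ atTop.liminf (fun i => (ν (ψ i)) G) + εp.toNNReal := by
      intro εp hεp
      -- eroded approximations of G
      set s : ℕ → Set ℝ := fun p =>
        {x : ℝ | Icc (x - 1/(p+1)) (x + 1/(p+1)) ⊆ G ∧ |x| < p + 1} with hsdef
      have hsmono : Monotone s := by
        intro p q hpq x hx
        have h1 : (1:ℝ)/(q+1) ≤ 1/(p+1) := by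
          apply one_div_le_one_div_of_le (by positivity)
          have : (p:ℝ) ≤ q := by exact_mod_cast hpq
          linarith
        refine ⟨fun y hy => hx.1 ⟨by linarith [hy.1], by linarith [hy.2]⟩, ?_⟩
        have h2 : (p:ℝ) + 1 ≤ (q:ℝ) + 1 := by
          have : (p:ℝ) ≤ q := by exact_mod_cast hpq
          linarith
        exact lt_of_lt_of_le hx.2 h2
      have hsunion : (⋃ p, s p) = G := by
        apply subset_antisymm
        · refine iUnion_subset fun p x hx => hx.1 ⟨?_, ?_⟩
          · have : (0:ℝ) < 1/(p+1) := by positivity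
            linarith
          · have : (0:ℝ) < 1/(p+1) := by positivity
            linarith
        · intro x hx
          obtain ⟨δ', hδ', hball⟩ := Metric.isOpen_iff.1 hG x hx
          obtain ⟨p, hp⟩ := exists_nat_gt (max (2/δ') |x|)
          refine mem_iUnion.2 ⟨p, ⟨?_, ?_⟩⟩
          · intro y hy
            apply hball
            rw [Metric.mem_ball, Real.dist_eq]
            have h1 : (2:ℝ)/δ' < p := lt_of_le_of_lt (le_max_left _ _) hp
            have hppos : (0:ℝ) < p + 1 := by positivity
            have h1' : (1:ℝ)/(p+1) < δ'/2 := by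
              rw [div_lt_div_iff₀ hppos (by linarith)]
              rw [div_lt_iff₀ (by linarith)] at h1
              nlinarith
            have hy1 := hy.1
            have hy2 := hy.2
            rw [abs_lt]
            constructor <;> [linarith; linarith]
          · have h2 : |x| < p := lt_of_le_of_lt (le_max_right _ _) hp
            have : (p:ℝ) ≤ p + 1 := by linarith
            linarith
      have htendsto := tendsto_measure_iUnion_atTop (μ := St.measure) hsmono
      rw [hsunion] at htendsto
      obtain ⟨m, hm⟩ : ∃ p : ℕ, St.measure G ≤ St.measure (s p) + ENNReal.ofReal εp := by
        by_cases hle : St.measure G ≤ ENNReal.ofReal εp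
        · exact ⟨0, hle.trans le_add_self⟩
        · push_neg at hle
          have hne0 : St.measure G ≠ 0 := by
            intro h0
            rw [h0] at hle
            exact (not_lt.2 zero_le) hle
          have hsublt : St.measure G - ENNReal.ofReal εp < St.measure G :=
            ENNReal.sub_lt_self (measure_ne_top _ _) hne0
              (by simpa [ENNReal.ofReal_pos] using hεp)
          have hev : ∀ᶠ p in atTop, St.measure G - ENNReal.ofReal εp < St.measure (s p) :=
            htendsto.eventually (eventually_gt_nhds hsublt)
          obtain ⟨p, hp⟩ := hev.exists
          refine ⟨p, ?_⟩
          have hp' : St.measure G - ENNReal.ofReal εp < St.measure (s p) := hp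
          exact tsub_le_iff_right.1 hp'.le
      -- the grid
      set δ : ℝ := 1/(m+1) with hδdef
      have hδpos : 0 < δ := by positivity
      set h2 : ℝ := δ/2 with hh2
      have hh2pos : 0 < h2 := by positivity
      set Amax : ℝ := (m : ℝ) + 2 with hAdef
      have hA1 : (0:ℝ) < Amax := by positivity
      have hchoice : ∀ j : ℕ, ∃ tv : ℝ, ContinuousAt H tv ∧
          tv ∈ Ioo (-Amax + j * h2) (-Amax + j * h2 + h2) := by
        intro j
        obtain ⟨tv, htv1, htv2⟩ := hDdense.inter_open_nonempty
          (Ioo (-Amax + j*h2) (-Amax + j*h2 + h2)) isOpen_Ioo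
          (nonempty_Ioo.2 (by linarith))
        exact ⟨tv, htv2, htv1⟩
      choose t ht1 ht2 using hchoice
      have htmono : StrictMono t := by
        refine strictMono_nat_of_lt_succ fun j => ?_
        have a1 := (ht2 j).2
        have a2 := (ht2 (j+1)).1
        push_cast at a1 a2
        linarith
      have hgap : ∀ j : ℕ, t (j+1) - t j < δ := by
        intro j
        have a1 := (ht2 j).1
        have a2 := (ht2 (j+1)).2
        push_cast at a1 a2
        have : h2 + h2 = δ := by rw [hh2]; ring
        linarith
      obtain ⟨mm, hmm⟩ := exists_nat_gt ((2*Amax)/h2)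
      have htop' : Amax < t mm := by
        have a1 := (ht2 mm).1
        have hmm' : 2*Amax < mm * h2 := by
          rw [div_lt_iff₀ hh2pos] at hmm
          linarith
        linarith
      have hbot' : t 0 < -Amax + h2 := by
        have := (ht2 0).2
        simpa using this
      -- the selected cells
      set SS : Finset ℕ :=
        (Finset.range mm).filter (fun j => (Ioc (t j) (t (j+1)) ∩ s m).Nonempty) with hSS
      set U : Set ℝ := ⋃ j ∈ SS, Ioc (t j) (t (j+1)) with hU
      have hUG : U ⊆ G := by
        intro y hy
        simp only [hU, mem_iUnion] at hy
        obtain ⟨j, hj, hyj⟩ := hy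
        obtain ⟨w, hw1, hw2⟩ := (Finset.mem_filter.1 hj).2
        have hgapj := hgap j
        have hy1 := hyj.1
        have hy2 := hyj.2
        have hwa := hw1.1
        have hwb := hw1.2
        have hIccδ : Icc (w - δ) (w + δ) ⊆ G := by rw [hδdef]; exact hw2.1
        refine hIccδ ⟨by linarith, by linarith⟩
      have hsU : s m ⊆ U := by
        intro x hx
        have hx1 : |x| < (m:ℝ) + 1 := hx.2
        have hax := abs_lt.1 hx1
        have hh2le : h2 ≤ 1 := by
          rw [hh2, hδdef]
          have hm0 : (0:ℝ) ≤ m := Nat.cast_nonneg m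
          have hd1 : (1:ℝ)/(↑m+1) ≤ 1 := by
            rw [div_le_one (by linarith)]
            linarith
          linarith
        have hxIoc : x ∈ Ioc (t 0) (t mm) := by
          constructor
          · have : -Amax + h2 ≤ -(m:ℝ) - 1 := by rw [hAdef]; linarith
            linarith [hbot', hax.1]
          · have : (m:ℝ) + 1 ≤ Amax := by rw [hAdef]; linarith
            linarith [htop', hax.2]
        rw [← iUnion_Ioc_succ htmono.monotone mm] at hxIoc
        obtain ⟨j, hj, hxj⟩ := mem_iUnion₂.1 hxIoc
        have hjSS : j ∈ SS := Finset.mem_filter.2 ⟨hj, ⟨x, hxj, hx⟩⟩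
        exact mem_iUnion₂.2 ⟨j, hjSS, hxj⟩
      have hdisj : (SS : Set ℕ).PairwiseDisjoint (fun j => Ioc (t j) (t (j+1))) := by
        intro i _ j _ hij
        rcases lt_or_gt_of_ne hij with h | h
        · refine Set.Ioc_disjoint_Ioc.2 ?_
          exact le_trans inf_le_left (le_trans (htmono.monotone h) le_sup_right)
        · refine Set.Ioc_disjoint_Ioc.2 ?_
          exact le_trans inf_le_right (le_trans (htmono.monotone h) le_sup_left)
      have hmeasU : ∀ κ : Measure ℝ, κ U = ∑ j ∈ SS, κ (Ioc (t j) (t (j+1))) := fun κ =>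
        measure_biUnion_finset hdisj (fun j _ => measurableSet_Ioc)
      have hUconv : Tendsto (fun k => ((ν (ψ k) : Measure ℝ) U).toReal) atTop
          (𝓝 ((St.measure U).toReal)) := by
        have e1 : ∀ k, ((ν (ψ k) : Measure ℝ) U).toReal
            = ∑ j ∈ SS, ((ν (ψ k) : Measure ℝ) (Ioc (t j) (t (j+1)))).toReal := fun k => by
          rw [hmeasU, ENNReal.toReal_sum (fun j _ => measure_ne_top _ _)]
        have e2 : (St.measure U).toReal
            = ∑ j ∈ SS, (St.measure (Ioc (t j) (t (j+1)))).toReal := by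
          rw [hmeasU, ENNReal.toReal_sum (fun j _ => measure_ne_top _ _)]
        rw [e2]
        exact Tendsto.congr (fun k => (e1 k).symm)
          (tendsto_finset_sum _ fun j _ =>
            hIoc _ _ (htmono (Nat.lt_succ_self j)).le (ht1 j) (ht1 (j+1)))
      have hUconv' : Tendsto (fun k => (ν (ψ k)) U) atTop (𝓝 (μP U)) := by
        rw [← NNReal.tendsto_coe]
        exact hUconv
      have hliminfU : atTop.liminf (fun k => (ν (ψ k)) U) = μP U := hUconv'.liminf_eq
      have hmonoLim : atTop.liminf (fun k => (ν (ψ k)) U)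
          ≤ atTop.liminf (fun k => (ν (ψ k)) G) := by
        refine liminf_le_liminf (Eventually.of_forall fun k =>
          (ν (ψ k)).apply_mono hUG) ?_ ?_
        · exact Filter.isBoundedUnder_of ⟨0, fun k => zero_le⟩
        · exact Filter.IsBoundedUnder.isCoboundedUnder_ge
            (Filter.isBoundedUnder_of ⟨1, fun k => (ν (ψ k)).apply_le_one _⟩)
      have hGU : (μP G : ℝ≥0) ≤ μP U + εp.toNNReal := by
        have hUfe : St.measure G ≤ St.measure U + ENNReal.ofReal εp :=
          le_trans hm (add_le_add_left (measure_mono hsU) _)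
        have hfin : St.measure U + ENNReal.ofReal εp ≠ ⊤ :=
          ENNReal.add_ne_top.2 ⟨measure_ne_top _ _, ENNReal.ofReal_ne_top⟩
        have h3 := ENNReal.toNNReal_mono hfin hUfe
        rwa [ENNReal.toNNReal_add (measure_ne_top _ _) ENNReal.ofReal_ne_top,
          ENNReal.ofReal, ENNReal.toNNReal_coe] at h3
      calc (μP G : ℝ≥0) ≤ μP U + εp.toNNReal := hGU
        _ ≤ atTop.liminf (fun k => (ν (ψ k)) G) + εp.toNNReal := by
            refine add_le_add_left ?_ _
            rw [← hliminfU]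
            exact hmonoLim
    by_contra hcon
    push_neg at hcon
    set Lb := atTop.liminf (fun i => (ν (ψ i)) G) with hLb
    have hεr : (0:ℝ) < ((μP G : ℝ≥0) : ℝ) - ((Lb : ℝ≥0) : ℝ) := by
      have := NNReal.coe_lt_coe.2 hcon
      linarith
    have hkey := key _ (half_pos hεr)
    have hc2 := NNReal.coe_le_coe.2 hkey
    rw [NNReal.coe_add, Real.coe_toNNReal _ (half_pos hεr).le] at hc2
    linarith
  exact ⟨ψ, hψ, μP, MeasureTheory.tendsto_of_forall_isOpen_le_liminf h_opens⟩

end RobustAux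

theorem robust_value_lsc (n : ℕ) {A : Type*} [MetricSpace A] (r : ℝ) (hr : 0 ≤ r)
    (v : (Fin n → ℝ) → A → ProbabilityMeasure ℝ → ℝ)
    (hvb : ∃ C : ℝ, ∀ x a F, |v x a F| ≤ C)
    (hvlsc : LowerSemicontinuous
      (fun p : (Fin n → ℝ) × A × ProbabilityMeasure ℝ => v p.1 p.2.1 p.2.2))
    (xk : ℕ → Fin n → ℝ) (x0 : Fin n → ℝ) (hx : Tendsto xk atTop (nhds x0))
    (ak : ℕ → A) (a0 : A) (ha : Tendsto ak atTop (nhds a0))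
    (fk : ℕ → Measure ℝ) (f0 : Measure ℝ)
    [∀ k, IsProbabilityMeasure (fk k)] [IsProbabilityMeasure f0]
    (hfk : ∀ k, Integrable id (fk k)) (hf0 : Integrable id f0)
    (hf : Tendsto (fun k => W1e (fk k) f0) atTop (nhds 0)) :
    vtil r v x0 f0 a0 ≤ liminf (fun k => vtil r v (xk k) (fk k) (ak k)) atTop := by
  classical
  obtain ⟨C0, hC0⟩ := hvb
  set L := liminf (fun k => vtil r v (xk k) (fk k) (ak k)) atTop with hLdef
  have hbddS : ∀ (x : Fin n → ℝ) (a : A) (f : Measure ℝ),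
      BddBelow {c : ℝ | ∃ F : ProbabilityMeasure ℝ,
        W1e (F : Measure ℝ) f ≤ ENNReal.ofReal r ∧ c = v x a F} := by
    intro x a f
    refine ⟨-C0, ?_⟩
    rintro c ⟨F, -, rfl⟩
    exact (abs_le.1 (hC0 x a F)).1
  have hmemS : ∀ (x : Fin n → ℝ) (a : A) (f : Measure ℝ) (hfP : IsProbabilityMeasure f),
      v x a ⟨f, hfP⟩ ∈ {c : ℝ | ∃ F : ProbabilityMeasure ℝ,
        W1e (F : Measure ℝ) f ≤ ENNReal.ofReal r ∧ c = v x a F} := by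
    intro x a f hfP
    refine ⟨⟨f, hfP⟩, ?_, rfl⟩
    have h0 : W1e ((⟨f, hfP⟩ : ProbabilityMeasure ℝ) : Measure ℝ) f = 0 := RobustAux.W1e_self f
    exact le_of_eq_of_le h0 zero_le
  have hvtil_ub : ∀ k, vtil r v (xk k) (fk k) (ak k) ≤ C0 := by
    intro k
    have h1 : vtil r v (xk k) (fk k) (ak k) ≤ v (xk k) (ak k) ⟨fk k, inferInstance⟩ := by
      simp only [vtil]
      exact csInf_le (hbddS _ _ _) (hmemS _ _ _ inferInstance)
    exact h1.trans (abs_le.1 (hC0 _ _ _)).2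
  refine le_of_forall_pos_le_add fun ε hε => ?_
  have hfreq : ∃ᶠ k in atTop,
      vtil r v (xk k) (fk k) (ak k) < L + ε/2 ∧ W1e (fk k) f0 < 1 := by
    refine Frequently.and_eventually ?_ ?_
    · refine frequently_lt_of_liminf_lt ?_ (by linarith : L < L + ε/2)
      exact Filter.IsBoundedUnder.isCoboundedUnder_ge
        (Filter.isBoundedUnder_of ⟨C0, hvtil_ub⟩)
    · exact hf.eventually_lt_const zero_lt_one
  obtain ⟨φ, hφ, hφP⟩ := Filter.extraction_of_frequently_atTop hfreq
  have hchoose : ∀ k, ∃ F : ProbabilityMeasure ℝ,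
      W1e (F : Measure ℝ) (fk (φ k)) ≤ ENNReal.ofReal r ∧
      v (xk (φ k)) (ak (φ k)) F < L + ε/2 := by
    intro k
    have h1 : vtil r v (xk (φ k)) (fk (φ k)) (ak (φ k)) < L + ε/2 := (hφP k).1
    simp only [vtil] at h1
    obtain ⟨c, ⟨F, hF, rfl⟩, hc⟩ :=
      (csInf_lt_iff (hbddS _ _ _) ⟨_, hmemS _ _ _ inferInstance⟩).1 h1
    exact ⟨F, hF, hc⟩
  choose FF hFr hFv using hchoose
  have hWB : ∀ k, W1e (FF k : Measure ℝ) f0 ≤ ENNReal.ofReal (r + 1) := by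
    intro k
    refine (RobustAux.W1e_triangle _ (fk (φ k)) _).trans ?_
    have h2 : W1e (fk (φ k)) f0 ≤ 1 := (hφP k).2.le
    calc W1e (FF k : Measure ℝ) (fk (φ k)) + W1e (fk (φ k)) f0
        ≤ ENNReal.ofReal r + 1 := add_le_add (hFr k) h2
      _ = ENNReal.ofReal (r + 1) := by
          rw [ENNReal.ofReal_add hr zero_le_one, ENNReal.ofReal_one]
  obtain ⟨ψ, hψ, Flim, hFconv⟩ := RobustAux.helly FF
    (RobustAux.tight_of_W1e FF f0 hf0 (r+1) (by linarith) hWB)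
  have hψφ : Tendsto (fun k => φ (ψ k)) atTop atTop := (hφ.comp hψ).tendsto_atTop
  have hfeas : W1e (Flim : Measure ℝ) f0 ≤ ENNReal.ofReal r := by
    refine (RobustAux.W1e_le_liminf hFconv f0).trans ?_
    refine ENNReal.le_of_forall_pos_le_add fun δ hδ _ => ?_
    have hδ' : (0:ℝ≥0∞) < δ := by exact_mod_cast hδ
    have hev : ∀ᶠ k in atTop, W1e (fk (φ (ψ k))) f0 < (δ : ℝ≥0∞) :=
      (hf.comp hψφ).eventually_lt_const hδ'
    refine liminf_le_of_frequently_le ?_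
    refine (hev.mono fun k hk => ?_).frequently
    refine (RobustAux.W1e_triangle _ (fk (φ (ψ k))) _).trans ?_
    exact add_le_add (hFr (ψ k)) hk.le
  have hlim : Tendsto (fun k => ((xk (φ (ψ k))), (ak (φ (ψ k)), FF (ψ k)))) atTop
      (𝓝 (x0, (a0, Flim))) := by
    have h1 : Tendsto (fun k => xk (φ (ψ k))) atTop (𝓝 x0) := hx.comp hψφ
    have h2 : Tendsto (fun k => ak (φ (ψ k))) atTop (𝓝 a0) := ha.comp hψφ
    exact h1.prodMk_nhds (h2.prodMk_nhds hFconv)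
  have hvF : v x0 a0 Flim ≤ L + ε/2 := by
    by_contra hcon
    push_neg at hcon
    have hev := hvlsc (x0, (a0, Flim)) (L + ε/2) hcon
    obtain ⟨k, hk⟩ := (hlim.eventually hev).exists
    exact absurd (hFv (ψ k)) (not_lt.2 hk.le)
  have hfin : vtil r v x0 f0 a0 ≤ v x0 a0 Flim := by
    simp only [vtil]
    exact csInf_le (hbddS _ _ _) ⟨Flim, hfeas, rfl⟩
  linarith [hfin.trans hvF]
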